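/- Let (C, d, U, D₁, D₂) and (C′, d′, U′, D₁′, D₂′) be Floer data over a field Λ, let (c, φ, μ, Δ₁, Δ₂) be a cobordism datum between them, and let ĈW and ČW be as defined in the context. Then ĈW and ČW commute with the x-actions up to explicit chain homotopies: X̂′ ∘ ĈW − ĈW ∘ X̂ = 𝔎 ∘ d̂ + d̂′ ∘ 𝔎, where 𝔎 : Ĉ → Ĉ′ is defined by 𝔎(α, p) := (μ(α), Δ₁(α)); and X̌′ ∘ ČW − ČW ∘ X̌ = 𝔏 ∘ ď + ď′ ∘ 𝔏, where 𝔏 : Č → Č′ is defined by 𝔏(α, Σ_{i=−∞}^{−1} a_i x^i) := (μ(α) + Δ₂(a_{−1}), 0). -/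

import Mathlib

noncomputable section

variable (Λ : Type*) (V : Type*) [Field Λ] [AddCommGroup V] [Module Λ V]

/-- A Floer datum over the field `Λ`. -/
structure FloerDatum where
  gr : ZMod 8 → Submodule Λ V
  internal : DirectSum.IsInternal gr
  d : V →ₗ[Λ] V
  U : V →ₗ[Λ] V
  D₁ : V →ₗ[Λ] Λ
  D₂ : Λ →ₗ[Λ] V
  d_mem : ∀ (i : ZMod 8), ∀ v ∈ gr i, d v ∈ gr (i - 1)
  U_mem : ∀ (i : ZMod 8), ∀ v ∈ gr i, U v ∈ gr (i - 4)
  D₁_vanish : ∀ (i : ZMod 8), i ≠ 1 → ∀ v ∈ gr i, D₁ v = 0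
  D₂_mem : ∀ a : Λ, D₂ a ∈ gr 4
  d_d : d ∘ₗ d = 0
  D₁_d : D₁ ∘ₗ d = 0
  d_D₂ : d ∘ₗ D₂ = 0
  U_rel : U ∘ₗ d - d ∘ₗ U + D₂ ∘ₗ D₁ = 0

variable (V' : Type*) [AddCommGroup V'] [Module Λ V']
variable {Λ V V'}

/-- A cobordism datum between two Floer data. -/
structure CobordismDatum (F : FloerDatum Λ V) (F' : FloerDatum Λ V') where
  c : Λ
  φ : V →ₗ[Λ] V'
  μ : V →ₗ[Λ] V'
  Δ₁ : V →ₗ[Λ] Λ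
  Δ₂ : Λ →ₗ[Λ] V'
  φ_mem : ∀ (i : ZMod 8), ∀ v ∈ F.gr i, φ v ∈ F'.gr i
  μ_mem : ∀ (i : ZMod 8), ∀ v ∈ F.gr i, μ v ∈ F'.gr (i - 3)
  Δ₁_vanish : ∀ (i : ZMod 8), i ≠ 0 → ∀ v ∈ F.gr i, Δ₁ v = 0
  Δ₂_mem : ∀ a : Λ, Δ₂ a ∈ F'.gr 5
  rel_d : φ ∘ₗ F.d = F'.d ∘ₗ φ
  rel_D₁ : Δ₁ ∘ₗ F.d + c • F.D₁ = F'.D₁ ∘ₗ φ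
  rel_D₂ : φ ∘ₗ F.D₂ = c • F'.D₂ - F'.d ∘ₗ Δ₂
  rel_U : μ ∘ₗ F.d + F'.d ∘ₗ μ + Δ₂ ∘ₗ F.D₁ + φ ∘ₗ F.U - F'.U ∘ₗ φ - F'.D₂ ∘ₗ Δ₁ = 0

variable {W : Type*} [AddCommGroup W] [Module Λ W]
variable {M : Type*} [AddCommGroup M] [Module Λ M]

/-- `p = Σ aᵢ xⁱ ↦ Σ f i aᵢ`, as a linear map on polynomials. -/
def polySum (f : ℕ → (Λ →ₗ[Λ] W)) : Polynomial Λ →ₗ[Λ] W where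
  toFun p := p.sum fun i a => f i a
  map_add' p q :=
    Polynomial.sum_add_index p q _ (fun i => map_zero (f i)) (fun i b c => map_add (f i) b c)
  map_smul' a p := by
    show (a • p).sum (fun i b => f i b) = a • p.sum fun i b => f i b
    rw [Polynomial.sum_smul_index p a _ (fun i => map_zero (f i)),
      Polynomial.sum, Polynomial.sum, Finset.smul_sum]
    exact Finset.sum_congr rfl fun n _ => by rw [← smul_eq_mul, map_smul]

/-- The differential `d̂` on `Ĉ = C ⊕ Λ[x]`. -/
def hatd (F : FloerDatum Λ V) : (V × Polynomial Λ) →ₗ[Λ] (V × Polynomial Λ) :=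
  ((F.d ∘ₗ LinearMap.fst Λ V (Polynomial Λ))
    - (polySum fun i => (F.U ^ i) ∘ₗ F.D₂) ∘ₗ LinearMap.snd Λ V (Polynomial Λ)).prod 0

/-- The map `X̂(α, p) = (U α, D₁ α + x·p)` on `Ĉ`. -/
def hatX (F : FloerDatum Λ V) : (V × Polynomial Λ) →ₗ[Λ] (V × Polynomial Λ) :=
  (F.U ∘ₗ LinearMap.fst Λ V (Polynomial Λ)).prod
    ((Algebra.linearMap Λ (Polynomial Λ)) ∘ₗ F.D₁ ∘ₗ LinearMap.fst Λ V (Polynomial Λ)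
      + (LinearMap.mulLeft Λ (Polynomial.X : Polynomial Λ)) ∘ₗ LinearMap.snd Λ V (Polynomial Λ))

/-- The cobordism map `ĈW : Ĉ → Ĉ′`. -/
def hatCW {F : FloerDatum Λ V} {F' : FloerDatum Λ V'} (G : CobordismDatum F F') :
    (V × Polynomial Λ) →ₗ[Λ] (V' × Polynomial Λ) :=
  (G.φ ∘ₗ LinearMap.fst Λ V (Polynomial Λ)
    + (polySum fun i => (F'.U ^ i) ∘ₗ G.Δ₂
        + ∑ k ∈ Finset.range i, (F'.U ^ k) ∘ₗ G.μ ∘ₗ (F.U ^ (i - 1 - k)) ∘ₗ F.D₂)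
        ∘ₗ LinearMap.snd Λ V (Polynomial Λ)).prod
  (G.c • LinearMap.snd Λ V (Polynomial Λ)
    + (polySum fun k =>
        (∑ i ∈ Finset.range k,
          (LinearMap.smulRight (F'.D₁ ∘ₗ (F'.U ^ (k - 1 - i)) ∘ₗ G.Δ₂)
              ((Polynomial.X : Polynomial Λ) ^ i)
            + LinearMap.smulRight (G.Δ₁ ∘ₗ (F.U ^ (k - 1 - i)) ∘ₗ F.D₂)
              ((Polynomial.X : Polynomial Λ) ^ i)))
        + ∑ j ∈ Finset.range k, ∑ i ∈ Finset.range j,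
            LinearMap.smulRight
              (F'.D₁ ∘ₗ (F'.U ^ (j - i - 1)) ∘ₗ G.μ ∘ₗ (F.U ^ (k - j - 1)) ∘ₗ F.D₂)
              ((Polynomial.X : Polynomial Λ) ^ i))
      ∘ₗ LinearMap.snd Λ V (Polynomial Λ))

/-- Package a family of `Λ`-linear coefficient functionals into a linear map to power series.
We use `PowerSeries Λ` (in the variable `x⁻¹`) as a model for `x⁻¹Λ[[x⁻¹]]`: a power series `q`
represents the series `Σ_{n≥0} (coeff n q) x^{-(n+1)}`. -/
def toPS (c : ℕ → (M →ₗ[Λ] Λ)) : M →ₗ[Λ] PowerSeries Λ where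
  toFun m := PowerSeries.mk fun n => c n m
  map_add' x y := by
    ext n
    simp [PowerSeries.coeff_mk]
  map_smul' a x := by
    ext n
    simp [PowerSeries.coeff_mk]

/-- The differential `ď` on `Č = C ⊕ x⁻¹Λ[[x⁻¹]]`. -/
def checkd (F : FloerDatum Λ V) : (V × PowerSeries Λ) →ₗ[Λ] (V × PowerSeries Λ) :=
  (F.d ∘ₗ LinearMap.fst Λ V (PowerSeries Λ)).prod
    ((toPS fun n => F.D₁ ∘ₗ (F.U ^ n)) ∘ₗ LinearMap.fst Λ V (PowerSeries Λ))

/-- The map `X̌` on `Č`. -/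
def checkX (F : FloerDatum Λ V) : (V × PowerSeries Λ) →ₗ[Λ] (V × PowerSeries Λ) :=
  (F.U ∘ₗ LinearMap.fst Λ V (PowerSeries Λ)
      + F.D₂ ∘ₗ (PowerSeries.coeff (R := Λ) 0) ∘ₗ LinearMap.snd Λ V (PowerSeries Λ)).prod
    ((toPS fun n => PowerSeries.coeff (R := Λ) (n + 1)) ∘ₗ LinearMap.snd Λ V (PowerSeries Λ))

variable {F : FloerDatum Λ V} {F' : FloerDatum Λ V'}

/-- `α ↦ Σ_{i≤-1} Δ₁(U^{-i-1} α) xⁱ`. -/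
def tailDelta (G : CobordismDatum F F') : V →ₗ[Λ] PowerSeries Λ :=
  toPS fun n => G.Δ₁ ∘ₗ (F.U ^ n)

/-- `α ↦ Σ_{i≤-2} (Σ_{i+1≤j≤-1} D₁′(U′^{-j-1}(μ(U^{j-i-1} α)))) xⁱ`. -/
def tailMu (G : CobordismDatum F F') : V →ₗ[Λ] PowerSeries Λ :=
  toPS fun n => ∑ m ∈ Finset.range n, F'.D₁ ∘ₗ (F'.U ^ m) ∘ₗ G.μ ∘ₗ (F.U ^ (n - 1 - m))

/-- The series (in nonpositive powers of `x`, i.e. a power series in `t = x⁻¹`)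
`S = c + Σ_{j≤-1} Δ₁(U^{-j-1}(D₂ 1)) xʲ + Σ_{j≤-1} D₁′(U′^{-j-1}(Δ₂ 1)) xʲ
   + Σ_{j,k≤-1} D₁′(U′^{-j-1}(μ(U^{-k-1}(D₂ 1)))) x^{j+k}`. -/
def Sser (G : CobordismDatum F F') : PowerSeries Λ :=
  PowerSeries.mk fun m =>
    match m with
    | 0 => G.c
    | n + 1 =>
      G.Δ₁ ((F.U ^ n) (F.D₂ 1)) + F'.D₁ ((F'.U ^ n) (G.Δ₂ 1)) +
        ∑ s ∈ Finset.range n, F'.D₁ ((F'.U ^ s) (G.μ ((F.U ^ (n - 1 - s)) (F.D₂ 1))))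

/-- The cobordism map `ČW : Č → Č′`. -/
def checkCW (G : CobordismDatum F F') : (V × PowerSeries Λ) →ₗ[Λ] (V' × PowerSeries Λ) :=
  (G.φ ∘ₗ LinearMap.fst Λ V (PowerSeries Λ)).prod
    ((tailDelta G + tailMu G) ∘ₗ LinearMap.fst Λ V (PowerSeries Λ)
      + (LinearMap.mulRight Λ (Sser G)) ∘ₗ LinearMap.snd Λ V (PowerSeries Λ))

/-- The chain homotopy `𝔎 : Ĉ → Ĉ′`, `𝔎(α, p) = (μ α, Δ₁ α)`. -/
def bigK (G : CobordismDatum F F') : (V × Polynomial Λ) →ₗ[Λ] (V' × Polynomial Λ) :=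
  (G.μ ∘ₗ LinearMap.fst Λ V (Polynomial Λ)).prod
    ((Algebra.linearMap Λ (Polynomial Λ)) ∘ₗ G.Δ₁ ∘ₗ LinearMap.fst Λ V (Polynomial Λ))

/-- The chain homotopy `𝔏 : Č → Č′`, `𝔏(α, Σ_{i≤-1} aᵢ xⁱ) = (μ α + Δ₂ a₋₁, 0)`. -/
def bigL (G : CobordismDatum F F') : (V × PowerSeries Λ) →ₗ[Λ] (V' × PowerSeries Λ) :=
  (G.μ ∘ₗ LinearMap.fst Λ V (PowerSeries Λ)
    + G.Δ₂ ∘ₗ (PowerSeries.coeff (R := Λ) 0) ∘ₗ LinearMap.snd Λ V (PowerSeries Λ)).prod 0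


section helpers
variable {F : FloerDatum Λ V} {F' : FloerDatum Λ V'}

private lemma hS1 (G : CobordismDatum F F') (n : ℕ) :
    ∑ x ∈ Finset.range (n + 1),
        (F'.D₁ ((F'.U ^ (n - x)) (G.Δ₂ 1)) • (Polynomial.X : Polynomial Λ) ^ x
          + G.Δ₁ ((F.U ^ (n - x)) (F.D₂ 1)) • (Polynomial.X : Polynomial Λ) ^ x)
      = Polynomial.X * ∑ x ∈ Finset.range n,
          (F'.D₁ ((F'.U ^ (n - 1 - x)) (G.Δ₂ 1)) • (Polynomial.X : Polynomial Λ) ^ x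
            + G.Δ₁ ((F.U ^ (n - 1 - x)) (F.D₂ 1)) • (Polynomial.X : Polynomial Λ) ^ x)
      + (Polynomial.C (F'.D₁ ((F'.U ^ n) (G.Δ₂ 1))) + Polynomial.C (G.Δ₁ ((F.U ^ n) (F.D₂ 1)))) := by
  rw [Finset.sum_range_succ', Finset.mul_sum]
  congr 1
  · apply Finset.sum_congr rfl
    intro x hx
    have h : n - (x + 1) = n - 1 - x := by omega
    rw [h, mul_add, mul_smul_comm, mul_smul_comm, ← pow_succ']
  · have : n - 0 = n := by omega
    rw [this, pow_zero]
    rw [Polynomial.smul_eq_C_mul, Polynomial.smul_eq_C_mul, mul_one, mul_one]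

private lemma hS2 (G : CobordismDatum F F') (n : ℕ) :
    ∑ x ∈ Finset.range (n + 1), ∑ c ∈ Finset.range x,
        F'.D₁ ((F'.U ^ (x - c - 1)) (G.μ ((F.U ^ (n + 1 - x - 1)) (F.D₂ 1))))
          • (Polynomial.X : Polynomial Λ) ^ c
      = Polynomial.X * ∑ x ∈ Finset.range n, ∑ c ∈ Finset.range x,
          F'.D₁ ((F'.U ^ (x - c - 1)) (G.μ ((F.U ^ (n - x - 1)) (F.D₂ 1))))
            • (Polynomial.X : Polynomial Λ) ^ c
      + ∑ x ∈ Finset.range n,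
          Polynomial.C (F'.D₁ ((F'.U ^ x) (G.μ ((F.U ^ (n - 1 - x)) (F.D₂ 1))))) := by
  rw [Finset.sum_range_succ']
  simp only [Finset.range_zero, Finset.sum_empty, add_zero]
  have h1 : ∀ x ∈ Finset.range n,
      (∑ c ∈ Finset.range (x + 1),
        F'.D₁ ((F'.U ^ (x + 1 - c - 1)) (G.μ ((F.U ^ (n + 1 - (x + 1) - 1)) (F.D₂ 1))))
          • (Polynomial.X : Polynomial Λ) ^ c)
      = Polynomial.X * (∑ c ∈ Finset.range x,
          F'.D₁ ((F'.U ^ (x - c - 1)) (G.μ ((F.U ^ (n - x - 1)) (F.D₂ 1))))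
            • (Polynomial.X : Polynomial Λ) ^ c)
        + Polynomial.C (F'.D₁ ((F'.U ^ x) (G.μ ((F.U ^ (n - 1 - x)) (F.D₂ 1))))) := by
    intro x hx
    rw [Finset.sum_range_succ', Finset.mul_sum]
    congr 1
    · apply Finset.sum_congr rfl
      intro c hc
      have e1 : x + 1 - (c + 1) - 1 = x - c - 1 := by omega
      have e2 : n + 1 - (x + 1) - 1 = n - x - 1 := by omega
      rw [e1, e2, mul_smul_comm, ← pow_succ']
    · have e1 : x + 1 - 0 - 1 = x := by omega
      have e2 : n + 1 - (x + 1) - 1 = n - 1 - x := by omega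
      rw [e1, e2, pow_zero, Polynomial.smul_eq_C_mul, mul_one]
  rw [Finset.sum_congr rfl h1, Finset.sum_add_distrib, Finset.mul_sum]

end helpers

set_option maxHeartbeats 1000000 in
/-- `ĈW` and `ČW` commute with the `x`-actions up to the explicit chain homotopies `𝔎`, `𝔏`. -/
theorem stmt_10 (G : CobordismDatum F F') :
    hatX F' ∘ₗ hatCW G - hatCW G ∘ₗ hatX F = bigK G ∘ₗ hatd F + hatd F' ∘ₗ bigK G ∧
    checkX F' ∘ₗ checkCW G - checkCW G ∘ₗ checkX F
      = bigL G ∘ₗ checkd F + checkd F' ∘ₗ bigL G := by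
  have hR2 : ∀ α : V, G.Δ₁ (F.d α) + G.c * F.D₁ α = F'.D₁ (G.φ α) := by
    intro α
    have h := LinearMap.congr_fun G.rel_D₁ α
    simpa [smul_eq_mul] using h
  have hR3 : ∀ a : Λ, G.φ (F.D₂ a) = G.c • F'.D₂ a - F'.d (G.Δ₂ a) := by
    intro a
    simpa using LinearMap.congr_fun G.rel_D₂ a
  have hR4 : ∀ α : V, G.μ (F.d α) + F'.d (G.μ α) + G.Δ₂ (F.D₁ α) + G.φ (F.U α)
      - F'.U (G.φ α) - F'.D₂ (G.Δ₁ α) = 0 := by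
    intro α
    have h := LinearMap.congr_fun G.rel_U α
    simpa using h
  constructor
  · apply LinearMap.prod_ext
    · ext α
      · simp [hatX, hatCW, hatd, bigK, polySum, LinearMap.sub_apply, Polynomial.sum_C_index]
        linear_combination (norm := module) -hR4 α
      · simp [hatX, hatCW, hatd, bigK, polySum, LinearMap.sub_apply, Polynomial.sum_C_index,
          Polynomial.coeff_C]
        split
        · linear_combination -hR2 α
        · ring
    · apply Polynomial.lhom_ext'
      intro n
      apply LinearMap.ext_ring
      simp [hatX, hatCW, hatd, bigK, polySum]
      refine ⟨?_, ?_⟩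
      · rw [Finset.sum_range_succ']
        have h1 : ∀ k ∈ Finset.range n,
            (F'.U ^ (k + 1)) (G.μ ((F.U ^ (n - (k + 1))) (F.D₂ 1)))
            = F'.U ((F'.U ^ k) (G.μ ((F.U ^ (n - 1 - k)) (F.D₂ 1)))) := by
          intro k hk
          have e : n - (k + 1) = n - 1 - k := by omega
          rw [e, pow_succ', Module.End.mul_apply]
        rw [Finset.sum_congr rfl h1, pow_succ', Module.End.mul_apply, pow_zero]
        simp only [Module.End.one_apply, Nat.sub_zero]
        abel
      · rw [hS1 G n, hS2 G n, mul_add, mul_add, mul_smul_comm, Polynomial.X_mul_monomial]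
        abel
  · have hzero : (PowerSeries.mk fun _ => (0 : Λ)) = 0 := by
      ext n
      simp
    apply LinearMap.prod_ext
    · ext α
      · simp [checkX, checkCW, checkd, bigL, tailDelta, tailMu, toPS, Sser]
        linear_combination (norm := module) -hR4 α
      · rename_i n
        simp [checkX, checkCW, checkd, bigL, tailDelta, tailMu, toPS, Sser, hzero]
        rw [Finset.sum_range_succ]
        have e0 : n - n = 0 := by omega
        rw [e0, pow_zero, Module.End.one_apply, pow_succ, Module.End.mul_apply]
        have h1 : ∀ x ∈ Finset.range n,
            F'.D₁ ((F'.U ^ x) (G.μ ((F.U ^ (n - x)) α)))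
            = F'.D₁ ((F'.U ^ x) (G.μ ((F.U ^ (n - 1 - x)) (F.U α)))) := by
          intro x hx
          simp only [Finset.mem_range] at hx
          have e : n - x = (n - 1 - x) + 1 := by omega
          rw [e, pow_succ, Module.End.mul_apply]
        rw [Finset.sum_congr rfl h1]
        ring
    · ext q
      · simp [checkX, checkCW, checkd, bigL, tailDelta, tailMu, toPS, Sser]
        rw [mul_comm, ← smul_eq_mul, map_smul]
        linear_combination (norm := module) -hR3 ((PowerSeries.constantCoeff (R := Λ)) q)
      · simp [checkX, checkCW, checkd, bigL, tailDelta, tailMu, toPS, Sser]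
        rw [PowerSeries.coeff_mul, PowerSeries.coeff_mul, Finset.Nat.sum_antidiagonal_succ]
        simp only [PowerSeries.coeff_mk, PowerSeries.coeff_zero_eq_constantCoeff]
        have hD₂ : F.D₂ ((PowerSeries.constantCoeff (R := Λ)) q)
            = (PowerSeries.constantCoeff (R := Λ)) q • F.D₂ 1 := by
          rw [← map_smul, smul_eq_mul, mul_one]
        have hΔ₂ : G.Δ₂ ((PowerSeries.constantCoeff (R := Λ)) q)
            = (PowerSeries.constantCoeff (R := Λ)) q • G.Δ₂ 1 := by
          rw [← map_smul, smul_eq_mul, mul_one]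
        rw [hD₂, hΔ₂]
        simp only [map_smul, smul_eq_mul, Finset.mul_sum, mul_add]
        ring
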